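/- Let a : ℝ^d → ℝ^d be a Lipschitz, uniformly monotone bijection (with constant λ), and let F : ℝ^d × ℝ^d → ℝ ∪ {+∞} be a convex function representing a (i.e. F(p,q) ≥ p·q with equality iff q = a(p)). Define F*(q*,p*) := sup_{p,q} (p·q* + q·p* - F(p,q)). Then F* represents a⁻¹: F*(q,p) ≥ q·p for all (q,p), with equality if and only if p = a⁻¹(q). -/

import Mathlib

open scoped RealInnerProductSpace

private lemma aux_lim {A K c : ℝ} (h : ∀ t : ℝ, 0 < t → t < 1 → A + t * K ≤ c) :
    A ≤ c := by
  by_contra hc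
  push_neg at hc
  have hK : K < 0 := by
    have := h (1/2) (by norm_num) (by norm_num)
    nlinarith
  set t : ℝ := min (1/2) ((A - c) / (-K * 2)) with htdef
  have htpos : 0 < t := by
    apply lt_min (by norm_num)
    apply div_pos (by linarith) (by linarith)
  have htlt : t < 1 := lt_of_le_of_lt (min_le_left _ _) (by norm_num)
  have ht := h t htpos htlt
  have hbd : t ≤ (A - c) / (-K * 2) := min_le_right _ _
  have hmul : (A - c) / (-K * 2) * (-K * 2) = A - c :=
    div_mul_cancel₀ _ (by linarith)
  have h2 : t * (-K * 2) ≤ A - c := by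
    rw [← hmul]
    exact mul_le_mul_of_nonneg_right hbd (by linarith)
  nlinarith

private lemma key_ineq {d : ℕ}
    (F : EuclideanSpace ℝ (Fin d) → EuclideanSpace ℝ (Fin d) → EReal)
    (hconv : ∀ (p₁ q₁ p₂ q₂ : EuclideanSpace ℝ (Fin d)) (t : ℝ), 0 ≤ t → t ≤ 1 →
      F (t • p₁ + (1 - t) • p₂) (t • q₁ + (1 - t) • q₂) ≤
        ((t : ℝ) : EReal) * F p₁ q₁ + ((1 - t : ℝ) : EReal) * F p₂ q₂)
    (hge : ∀ p q, ((⟪p, q⟫ : ℝ) : EReal) ≤ F p q)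
    (p q p' q' : EuclideanSpace ℝ (Fin d))
    (hpq : F p q = ((⟪p, q⟫ : ℝ) : EReal)) :
    ((⟪p', q⟫ + ⟪p, q'⟫ - ⟪p, q⟫ : ℝ) : EReal) ≤ F p' q' := by
  rcases eq_or_ne (F p' q') ⊤ with h | h
  · simp [h]
  have hbot : F p' q' ≠ ⊥ := ((EReal.bot_lt_coe _).trans_le (hge p' q')).ne'
  have hc : F p' q' = ((F p' q').toReal : EReal) := (EReal.coe_toReal h hbot).symm
  set c := (F p' q').toReal with hcdef
  rw [hc, EReal.coe_le_coe_iff]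
  apply aux_lim (K := ⟪p', q'⟫ - (⟪p', q⟫ + ⟪p, q'⟫ - ⟪p, q⟫))
  intro t ht0 ht1
  have h1 := hconv p' q' p q t ht0.le ht1.le
  rw [hc, hpq] at h1
  have h3 := (hge (t • p' + (1 - t) • p) (t • q' + (1 - t) • q)).trans h1
  rw [← EReal.coe_mul, ← EReal.coe_mul, ← EReal.coe_add, EReal.coe_le_coe_iff] at h3
  have hexp : ⟪t • p' + (1 - t) • p, t • q' + (1 - t) • q⟫ =
      t * t * ⟪p', q'⟫ + t * (1 - t) * ⟪p', q⟫ + (1 - t) * t * ⟪p, q'⟫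
        + (1 - t) * (1 - t) * ⟪p, q⟫ := by
    simp only [inner_add_left, inner_add_right, real_inner_smul_left, real_inner_smul_right]
    ring
  rw [hexp] at h3
  nlinarith [h3, ht0]

theorem stmt7 (d : ℕ) (lam : ℝ) (hlam : 1 ≤ lam)
    (a : EuclideanSpace ℝ (Fin d) → EuclideanSpace ℝ (Fin d))
    (hbij : Function.Bijective a)
    (hLip : ∀ p₁ p₂, ‖a p₁ - a p₂‖ ≤ lam * ‖p₁ - p₂‖)
    (hMono : ∀ p₁ p₂, (1 / lam) * ‖p₁ - p₂‖ ^ 2 ≤ ⟪a p₁ - a p₂, p₁ - p₂⟫)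
    (F : EuclideanSpace ℝ (Fin d) → EuclideanSpace ℝ (Fin d) → EReal)
    (hconv : ∀ (p₁ q₁ p₂ q₂ : EuclideanSpace ℝ (Fin d)) (t : ℝ), 0 ≤ t → t ≤ 1 →
      F (t • p₁ + (1 - t) • p₂) (t • q₁ + (1 - t) • q₂) ≤
        ((t : ℝ) : EReal) * F p₁ q₁ + ((1 - t : ℝ) : EReal) * F p₂ q₂)
    (hge : ∀ p q, ((⟪p, q⟫ : ℝ) : EReal) ≤ F p q)
    (heq : ∀ p q, F p q = ((⟪p, q⟫ : ℝ) : EReal) ↔ q = a p)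
    (Fstar : EuclideanSpace ℝ (Fin d) → EuclideanSpace ℝ (Fin d) → EReal)
    (hFstar : ∀ qs ps, Fstar qs ps =
      ⨆ p : EuclideanSpace ℝ (Fin d), ⨆ q : EuclideanSpace ℝ (Fin d),
        (((⟪p, qs⟫ + ⟪q, ps⟫ : ℝ) : EReal) - F p q)) :
    (∀ q p, ((⟪q, p⟫ : ℝ) : EReal) ≤ Fstar q p) ∧
    (∀ q p, Fstar q p = ((⟪q, p⟫ : ℝ) : EReal) ↔ p = Function.invFun a q) := by
  have hlow : ∀ q p, ((⟪q, p⟫ : ℝ) : EReal) ≤ Fstar q p := by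
    intro q p
    rw [hFstar]
    have hterm : ((⟪q, p⟫ : ℝ) : EReal) = ((⟪p, q⟫ + ⟪a p, p⟫ : ℝ) : EReal) - F p (a p) := by
      rw [(heq p (a p)).mpr rfl, ← EReal.coe_sub, EReal.coe_eq_coe_iff]
      rw [real_inner_comm q p, real_inner_comm (a p) p]
      ring
    rw [hterm]
    exact le_iSup_of_le p (le_iSup_of_le (a p) le_rfl)
  refine ⟨hlow, fun q p => ⟨fun hsup => ?_, fun hp => ?_⟩⟩
  · -- equality implies p = a⁻¹ q
    have hreal : ∀ p', ⟪p', q⟫ + ⟪a p', p⟫ - ⟪p', a p'⟫ ≤ ⟪q, p⟫ := by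
      intro p'
      have h1 : ((⟪p', q⟫ + ⟪a p', p⟫ : ℝ) : EReal) - F p' (a p') ≤ ((⟪q, p⟫ : ℝ) : EReal) := by
        rw [← hsup, hFstar]
        exact le_iSup_of_le p' (le_iSup_of_le (a p') le_rfl)
      rw [(heq p' (a p')).mpr rfl, ← EReal.coe_sub, EReal.coe_le_coe_iff] at h1
      exact h1
    set r := Function.invFun a q with hrdef
    have har : a r = q := Function.rightInverse_invFun hbij.2 q
    set m := (1/2 : ℝ) • p + (1/2 : ℝ) • r with hmdef
    have hmr : m - r = (1/2 : ℝ) • (p - r) := by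
      rw [hmdef]; module
    have hmp : m - p = -((1/2 : ℝ) • (p - r)) := by
      rw [hmdef]; module
    have hmono := hMono m r
    rw [har, hmr] at hmono
    have hnorm : ‖(1/2 : ℝ) • (p - r)‖ ^ 2 = (1/4) * ‖p - r‖ ^ 2 := by
      rw [norm_smul]; simp; ring
    rw [hnorm] at hmono
    have hinner1 : ⟪a m - q, (1/2 : ℝ) • (p - r)⟫ = (1/2) * ⟪a m - q, p - r⟫ :=
      real_inner_smul_right _ _ _
    rw [hinner1] at hmono
    -- from hreal at m : ⟪m - p, a m - q⟫ ≥ 0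
    have hr := hreal m
    have hexp : ⟪m, q⟫ + ⟪a m, p⟫ - ⟪m, a m⟫ - ⟪q, p⟫ = -⟪m - p, a m - q⟫ := by
      simp only [inner_sub_left, inner_sub_right]
      rw [real_inner_comm p (a m), real_inner_comm p q]
      ring
    have hpos : (0 : ℝ) ≤ ⟪m - p, a m - q⟫ := by
      have h0 : ⟪m, q⟫ + ⟪a m, p⟫ - ⟪m, a m⟫ - ⟪q, p⟫ ≤ 0 := by linarith
      rw [hexp] at h0
      linarith
    rw [hmp, inner_neg_left, real_inner_smul_left,
      real_inner_comm (a m - q) (p - r)] at hpos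
    have hlam0 : (0 : ℝ) < lam := lt_of_lt_of_le one_pos hlam
    have hn2 : ‖p - r‖ ^ 2 ≤ 0 := by
      have h4 : (1 / lam) * ((1/4) * ‖p - r‖ ^ 2) ≤ 0 := by linarith
      nlinarith [div_pos one_pos hlam0]
    have : ‖p - r‖ = 0 := by nlinarith [norm_nonneg (p - r)]
    exact norm_sub_eq_zero_iff.mp this
  · -- p = a⁻¹ q implies equality
    have har : a p = q := by rw [hp]; exact Function.rightInverse_invFun hbij.2 q
    refine le_antisymm ?_ (hlow q p)
    rw [hFstar]
    refine iSup_le fun p' => iSup_le fun q' => ?_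
    have hbot : F p' q' ≠ ⊥ := ((EReal.bot_lt_coe _).trans_le (hge p' q')).ne'
    rw [EReal.sub_le_iff_le_add (Or.inl hbot) (Or.inr (EReal.coe_ne_bot _))]
    have hpq : F p q = ((⟪p, q⟫ : ℝ) : EReal) := (heq p q).mpr har.symm
    have hk := key_ineq F hconv hge p q p' q' hpq
    calc ((⟪p', q⟫ + ⟪q', p⟫ : ℝ) : EReal)
        = ((⟪q, p⟫ : ℝ) : EReal) + ((⟪p', q⟫ + ⟪p, q'⟫ - ⟪p, q⟫ : ℝ) : EReal) := by
          rw [← EReal.coe_add, EReal.coe_eq_coe_iff]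
          rw [real_inner_comm q' p, real_inner_comm q p]
          ring
      _ ≤ ((⟪q, p⟫ : ℝ) : EReal) + F p' q' := add_le_add_right hk _
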